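/- For the λ-biased random walk on the d-regular tree started at the root, the probability of ever returning to the root equals min(λ, d-1)/(d-1). -/

import Mathlib

open Finset Filter

/-- The k-th Catalan number as a real number. -/
noncomputable def catR (k : ℕ) : ℝ := (Nat.choose (2 * k) k : ℝ) / (k + 1)

lemma catR_eq_catalan (k : ℕ) : catR k = (catalan k : ℝ) := by
  rw [catalan_eq_centralBinom_div, Nat.cast_div (Nat.succ_dvd_centralBinom k) (by positivity)]
  simp [catR, Nat.centralBinom]

lemma catR_nonneg (k : ℕ) : 0 ≤ catR k := by
  rw [catR_eq_catalan]; positivity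

lemma catR_zero : catR 0 = 1 := by simp [catR]

/-- `b n = centralBinom n / 4^n`. -/
noncomputable def bSeq (n : ℕ) : ℝ := (Nat.centralBinom n : ℝ) / 4 ^ n

lemma bSeq_nonneg (n : ℕ) : 0 ≤ bSeq n := by unfold bSeq; positivity

lemma bSeq_succ (n : ℕ) : bSeq (n + 1) = bSeq n * (2 * n + 1) / (2 * (n + 1)) := by
  have h := Nat.succ_mul_centralBinom_succ n
  have h' : ((n : ℝ) + 1) * (Nat.centralBinom (n + 1) : ℝ)
      = 2 * (2 * n + 1) * (Nat.centralBinom n : ℝ) := by exact_mod_cast congrArg (Nat.cast (R := ℝ)) h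
  unfold bSeq
  have hn : ((n : ℝ) + 1) ≠ 0 := by positivity
  field_simp [pow_succ]
  linear_combination (2 * (4:ℝ) ^ n) * h' 

lemma bSeq_sq (n : ℕ) : (2 * n + 1) * bSeq n ^ 2 ≤ 1 := by
  induction n with
  | zero => simp [bSeq, Nat.centralBinom]
  | succ n ih =>
    rw [bSeq_succ]
    push_cast
    rw [div_pow, mul_div_assoc', div_le_one (by positivity)]
    nlinarith [mul_le_mul_of_nonneg_left ih
      (by positivity : (0:ℝ) ≤ (2 * (n:ℝ) + 3) * (2 * (n:ℝ) + 1))]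

lemma bSeq_tendsto : Tendsto bSeq atTop (nhds 0) := by
  have hle : ∀ n : ℕ, bSeq n ≤ Real.sqrt (1 / (n + 1)) := by
    intro n
    have h := bSeq_sq n
    have h2 : bSeq n ^ 2 ≤ 1 / (n + 1) := by
      rw [le_div_iff₀ (by positivity)]
      nlinarith [sq_nonneg (bSeq n)]
    calc bSeq n = Real.sqrt (bSeq n ^ 2) := by rw [Real.sqrt_sq (bSeq_nonneg n)]
      _ ≤ Real.sqrt (1 / (n + 1)) := Real.sqrt_le_sqrt h2
  have h0 : Tendsto (fun n : ℕ => Real.sqrt (1 / (n + 1))) atTop (nhds 0) := by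
    have h := (Real.continuous_sqrt.tendsto 0).comp tendsto_one_div_add_atTop_nhds_zero_nat
    simp only [Function.comp_def, Real.sqrt_zero] at h
    exact h
  exact tendsto_of_tendsto_of_tendsto_of_le_of_le tendsto_const_nhds h0 bSeq_nonneg hle

lemma partial_sum_quarter (n : ℕ) :
    ∑ k ∈ Finset.range n, catR k * (1/4 : ℝ) ^ k = 2 - 2 * bSeq n := by
  induction n with
  | zero => simp [bSeq, Nat.centralBinom]
  | succ n ih =>
    rw [Finset.sum_range_succ, ih, bSeq_succ]
    have hcat : catR n = bSeq n * 4 ^ n / (n + 1) := by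
      unfold catR bSeq Nat.centralBinom
      field_simp
    rw [hcat]
    have h4 : (4:ℝ) ^ n ≠ 0 := by positivity
    have hn : ((n:ℝ) + 1) ≠ 0 := by positivity
    field_simp
    have h14 : (1/4:ℝ)^n * 4^n = 1 := by rw [← mul_pow]; norm_num
    linear_combination bSeq n * h14

lemma hasSum_quarter : HasSum (fun n : ℕ => catR n * (1/4 : ℝ) ^ n) 2 := by
  have hnn : ∀ n : ℕ, 0 ≤ catR n * (1/4 : ℝ) ^ n := fun n => by
    have := catR_nonneg n; positivity
  rw [hasSum_iff_tendsto_nat_of_nonneg hnn]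
  simp_rw [partial_sum_quarter]
  have : Tendsto (fun n : ℕ => 2 - 2 * bSeq n) atTop (nhds (2 - 2 * 0)) :=
    (tendsto_const_nhds.sub (tendsto_const_nhds.mul bSeq_tendsto))
  simpa using this

section xfacts

variable {x : ℝ} (hx0 : 0 ≤ x) (hx4 : x ≤ 1/4)

include hx0 hx4 in
lemma term_le (n : ℕ) : catR n * x ^ n ≤ catR n * (1/4 : ℝ) ^ n :=
  mul_le_mul_of_nonneg_left (pow_le_pow_left₀ hx0 hx4 n) (catR_nonneg n)

include hx0 hx4 in
lemma summable_cat : Summable (fun n : ℕ => catR n * x ^ n) :=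
  Summable.of_nonneg_of_le (fun n => by have := catR_nonneg n; positivity)
    (term_le hx0 hx4) hasSum_quarter.summable

include hx0 hx4 in
lemma tsum_le_two : (∑' n : ℕ, catR n * x ^ n) ≤ 2 := by
  have := Summable.tsum_le_tsum (term_le hx0 hx4) (summable_cat hx0 hx4) hasSum_quarter.summable
  rwa [hasSum_quarter.tsum_eq] at this

include hx0 hx4 in
lemma quadratic : x * ((∑' n : ℕ, catR n * x ^ n) * (∑' n : ℕ, catR n * x ^ n)) + 1
    = ∑' n : ℕ, catR n * x ^ n := by
  set f : ℕ → ℝ := fun n => catR n * x ^ n with hf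
  have hsum : Summable f := summable_cat hx0 hx4
  have hnorm : Summable fun n => ‖f n‖ := by
    have : ∀ n, ‖f n‖ = f n := fun n => Real.norm_of_nonneg
      (by have := catR_nonneg n; positivity)
    simpa [this] using hsum
  have hcauchy := tsum_mul_tsum_eq_tsum_sum_range_of_summable_norm hnorm hnorm
  have hinner : ∀ n : ℕ, ∑ k ∈ Finset.range (n + 1), f k * f (n - k)
      = catR (n + 1) * x ^ n := by
    intro n
    have : ∀ k ∈ Finset.range (n + 1), f k * f (n - k)
        = (catR k * catR (n - k)) * x ^ n := by
      intro k hk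
      have hk' : k ≤ n := Nat.lt_succ_iff.mp (Finset.mem_range.mp hk)
      simp only [hf]
      rw [show catR k * x ^ k * (catR (n-k) * x ^ (n-k))
          = catR k * catR (n-k) * (x ^ k * x ^ (n-k)) by ring, ← pow_add,
        Nat.add_sub_cancel' hk']
    rw [Finset.sum_congr rfl this, ← Finset.sum_mul]
    congr 1
    rw [catR_eq_catalan, catalan_succ']
    rw [Nat.sum_antidiagonal_eq_sum_range_succ (fun a b => catalan a * catalan b) n]
    push_cast
    exact Finset.sum_congr rfl fun k _ => by rw [catR_eq_catalan, catR_eq_catalan]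
  rw [hcauchy]
  simp_rw [hinner]
  have hshift : ∑' n : ℕ, f n = f 0 + ∑' n : ℕ, f (n + 1) := Summable.tsum_eq_zero_add hsum
  have hf0 : f 0 = 1 := by simp [hf, catR_zero]
  have : x * (∑' n : ℕ, catR (n+1) * x ^ n) = ∑' n : ℕ, f (n + 1) := by
    rw [← tsum_mul_left]
    congr 1; funext n; simp only [hf]; ring
  rw [this, hshift, hf0]; ring

end xfacts

/-- The probability that the `λ`-biased random walk on the `d`-regular tree ever
returns to the root, `∑_{n≥1} f^{(2n)}`, equals `min(λ, d-1)/(d-1)`. -/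
theorem return_probability (d : ℕ) (hd : 2 ≤ d) (lam : ℝ) (hlam : 0 < lam) :
    ∑' n : ℕ,
        catR n * (((d : ℝ) - 1) / ((d : ℝ) - 1 + lam)) ^ n *
          (lam / ((d : ℝ) - 1 + lam)) ^ (n + 1) =
      min lam ((d : ℝ) - 1) / ((d : ℝ) - 1) := by
  have hd2 : (2:ℝ) ≤ (d:ℝ) := by exact_mod_cast hd
  obtain ⟨D, hD⟩ : ∃ D : ℝ, (d:ℝ) - 1 = D := ⟨_, rfl⟩
  have hD1 : (1:ℝ) ≤ D := by rw [← hD]; linarith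
  have hDpos : (0:ℝ) < D := by linarith
  have hD0 : D ≠ 0 := ne_of_gt hDpos
  rw [hD]
  obtain ⟨s, hs⟩ : ∃ s : ℝ, D + lam = s := ⟨_, rfl⟩
  have hspos : 0 < s := by rw [← hs]; positivity
  have hs0 : s ≠ 0 := ne_of_gt hspos
  rw [hs]
  obtain ⟨x, hx⟩ : ∃ x : ℝ, D / s * (lam / s) = x := ⟨_, rfl⟩
  have hx0 : 0 ≤ x := by rw [← hx]; positivity
  have hx4 : x ≤ 1/4 := by
    rw [← hx, div_mul_div_comm, div_le_div_iff₀ (by positivity) (by norm_num)]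
    rw [← hs]
    nlinarith [sq_nonneg (D - lam)]
  have hxe : x * (s * s) = D * lam := by
    rw [← hx]; field_simp
  have hterm : ∀ n : ℕ, catR n * (D / s) ^ n * (lam / s) ^ (n + 1)
      = (lam / s) * (catR n * x ^ n) := by
    intro n; rw [← hx, mul_pow, pow_succ]; ring
  obtain ⟨S, hS⟩ : ∃ S : ℝ, (∑' n : ℕ, catR n * x ^ n) = S := ⟨_, rfl⟩
  have hquad : x * (S * S) + 1 = S := by rw [← hS]; exact quadratic hx0 hx4
  have hle2 : S ≤ 2 := by rw [← hS]; exact tsum_le_two hx0 hx4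
  have hSnn : 0 ≤ S := by
    rw [← hS]; exact tsum_nonneg fun n => by have := catR_nonneg n; positivity
  simp_rw [hterm]
  rw [tsum_mul_left, hS]
  have hsq : (1 - 2 * x * S) ^ 2 = 1 - 4 * x := by nlinarith [hquad]
  have h14 : 1 - 4 * x = ((D - lam) / s) ^ 2 := by
    have h : (D - lam) ^ 2 = s * s - 4 * (D * lam) := by
      linear_combination (D + lam + s) * hs
    rw [div_pow, eq_div_iff (pow_ne_zero 2 hs0)]
    linear_combination -h - 4 * hxe
  have hxS : 2 * x * S ≤ 1 := by
    nlinarith [mul_le_mul_of_nonneg_left hle2 hx0]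
  have habs : 1 - 2 * x * S = |D - lam| / s := by
    have h1' : 0 ≤ 1 - 2 * x * S := by linarith
    rw [← Real.sqrt_sq h1', hsq, h14, Real.sqrt_sq_eq_abs, abs_div, abs_of_pos hspos]
  rcases le_total lam D with hc | hc
  · rw [min_eq_left hc]
    rw [abs_of_nonneg (by linarith)] at habs
    have h1 : (1 - 2 * x * S) * s = D - lam := by
      rw [habs, div_mul_cancel₀ _ hs0]
    have h2 : 2 * (x * (s * s)) * S = 2 * lam * s := by
      linear_combination (-s) * h1 - s * hs
    have h3 : 2 * lam * (D * S) = 2 * lam * s := by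
      linear_combination h2 - 2 * S * hxe
    have hDS : D * S = s := mul_left_cancel₀ (by positivity) h3
    rw [div_mul_eq_mul_div, div_eq_div_iff hs0 hD0]
    linear_combination lam * hDS
  · rw [min_eq_right hc]
    rw [abs_of_nonpos (by linarith)] at habs
    have h1 : (1 - 2 * x * S) * s = -(D - lam) := by
      rw [habs, div_mul_cancel₀ _ hs0]
    have h2 : 2 * (x * (s * s)) * S = 2 * D * s := by
      linear_combination (-s) * h1 - s * hs
    have h3 : 2 * D * (lam * S) = 2 * D * s := by
      linear_combination h2 - 2 * S * hxe
    have hlS : lam * S = s := mul_left_cancel₀ (by positivity) h3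
    rw [div_self hD0, div_mul_eq_mul_div, div_eq_one_iff_eq hs0]
    linear_combination hlS
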